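/- Let r ≥ 3, δ ∈ [0, 1/(2r)], and let G be an r-partite graph on parts of size n with minimum cross-degree at least (1−δ)n. Then for any edge xy of G with x ∈ V_i and y ∈ V_j (i ≠ j), the number z_{xy} of r-cliques containing xy satisfies z_{xy} ≥ k_{[r]∖{i,j}}(G) − 2δ(r−2)n · max_{k ∉ {i,j}} k_{[r]∖{i,j,k}}(G), where k_I(G) counts cliques with one vertex in each V_ℓ, ℓ ∈ I. In particular, every edge of G lies in at least one copy of K_r when δ ≤ 1/(8r). -/

import Mathlib

open Finset
open scoped Classical

lemma nonadj_card_le {V : Type*} [Fintype V] [DecidableEq V] {r n : ℕ}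
    (δ : ℝ) (G : SimpleGraph V) (P : V → Fin r)
    (hsize : ∀ i : Fin r, (Finset.univ.filter fun v => P v = i).card = n)
    (hdeg : ∀ (ℓ : Fin r) (v : V), P v ≠ ℓ →
      (1 - δ) * n ≤ ((Finset.univ.filter fun u => P u = ℓ ∧ G.Adj v u).card : ℝ))
    (ℓ : Fin r) (z : V) (hz : P z ≠ ℓ) :
    ((Finset.univ.filter fun w => P w = ℓ ∧ ¬ G.Adj z w).card : ℝ) ≤ δ * n := by
  have hsplit : (Finset.univ.filter fun v => P v = ℓ ∧ G.Adj z v).card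
      + (Finset.univ.filter fun v => P v = ℓ ∧ ¬ G.Adj z v).card = n := by
    rw [← hsize ℓ]
    have h := Finset.card_filter_add_card_filter_not
      (s := Finset.univ.filter fun v => P v = ℓ) (p := fun v => G.Adj z v)
    simpa [Finset.filter_filter] using h
  have h1 := hdeg ℓ z hz
  have hc : ((Finset.univ.filter fun v => P v = ℓ ∧ G.Adj z v).card : ℝ)
      + ((Finset.univ.filter fun v => P v = ℓ ∧ ¬ G.Adj z v).card : ℝ) = n := by
    exact_mod_cast hsplit
  linarith

lemma extend_clique {V : Type*} [Fintype V] [DecidableEq V] {r n : ℕ}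
    (δ : ℝ) (hδ0 : 0 ≤ δ) (hn : 1 ≤ n)
    (G : SimpleGraph V) (P : V → Fin r)
    (hsize : ∀ i : Fin r, (Finset.univ.filter fun v => P v = i).card = n)
    (hdeg : ∀ (ℓ : Fin r) (v : V), P v ≠ ℓ →
      (1 - δ) * n ≤ ((Finset.univ.filter fun u => P u = ℓ ∧ G.Adj v u).card : ℝ)) :
    ∀ (I : Finset (Fin r)) (T : Finset V), G.IsClique (T : Set V) →
      (∀ ℓ ∈ I, ∀ t ∈ T, P t ≠ ℓ) → δ * (T.card + I.card) < 1 + δ →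
      ∃ S : Finset V, T ⊆ S ∧ G.IsClique (S : Set V) ∧ S.card = T.card + I.card := by
  intro I
  induction I using Finset.induction_on with
  | empty => intro T hT _ _; exact ⟨T, subset_rfl, hT, by simp⟩
  | @insert a I ha ih =>
    intro T hT hdisj hsmall
    -- find a vertex in part a adjacent to all of T
    have hTa : ∀ t ∈ T, P t ≠ a := fun t ht => hdisj a (mem_insert_self a I) t ht
    have hnonadj : ∀ t ∈ T,
        ((Finset.univ.filter fun v => P v = a ∧ ¬ G.Adj t v).card : ℝ) ≤ δ * n :=
      fun t ht => nonadj_card_le δ G P hsize hdeg a t (hTa t ht)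
    set Good := Finset.univ.filter fun v => P v = a ∧ ∀ t ∈ T, G.Adj t v with hGood
    have hcover : (Finset.univ.filter fun v => P v = a) ⊆
        Good ∪ T.biUnion (fun t => Finset.univ.filter fun v => P v = a ∧ ¬ G.Adj t v) := by
      intro v hv
      simp only [mem_filter, mem_univ, true_and] at hv
      by_cases h : ∀ t ∈ T, G.Adj t v
      · refine mem_union_left _ ?_
        simp only [hGood, mem_filter, mem_univ, true_and]
        exact ⟨hv, h⟩
      · push_neg at h
        obtain ⟨t, ht, hadj⟩ := h
        exact mem_union_right _ (mem_biUnion.2 ⟨t, ht, by simp [hv, hadj]⟩)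
    have hcard : (n : ℝ) ≤ Good.card + T.card * (δ * n) := by
      have h1 : ((Finset.univ.filter fun v => P v = a).card : ℝ) ≤
          Good.card + ((T.biUnion (fun t => Finset.univ.filter fun v => P v = a ∧ ¬ G.Adj t v)).card : ℝ) := by
        have := Finset.card_le_card hcover
        have h2 := Finset.card_union_le Good (T.biUnion (fun t => Finset.univ.filter fun v => P v = a ∧ ¬ G.Adj t v))
        exact_mod_cast le_trans this h2
      have h3 : ((T.biUnion (fun t => Finset.univ.filter fun v => P v = a ∧ ¬ G.Adj t v)).card : ℝ)
          ≤ T.card * (δ * n) := by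
        calc ((T.biUnion _).card : ℝ) ≤ ∑ t ∈ T, ((Finset.univ.filter fun v => P v = a ∧ ¬ G.Adj t v).card : ℝ) := by
              exact_mod_cast Finset.card_biUnion_le
          _ ≤ ∑ _t ∈ T, δ * n := Finset.sum_le_sum hnonadj
          _ = T.card * (δ * n) := by rw [Finset.sum_const, nsmul_eq_mul]
      rw [hsize a] at h1
      linarith
    have hδT : δ * T.card < 1 := by
      have : δ * I.card ≥ 0 := by positivity
      have hc : ((insert a I).card : ℝ) = I.card + 1 := by
        rw [Finset.card_insert_of_notMem ha]; push_cast; ring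
      rw [hc] at hsmall
      nlinarith
    have hGoodpos : 0 < Good.card := by
      by_contra h
      push_neg at h
      interval_cases hg : Good.card
      · simp only [Nat.cast_zero] at hcard
        have hn' : (1:ℝ) ≤ n := by exact_mod_cast hn
        nlinarith
    obtain ⟨v, hv⟩ := Finset.card_pos.1 hGoodpos
    simp only [hGood, mem_filter, mem_univ, true_and] at hv
    obtain ⟨hva, hvadj⟩ := hv
    have hvT : v ∉ T := fun h => hTa v h hva
    have hclique : G.IsClique ((insert v T : Finset V) : Set V) := by
      rw [Finset.coe_insert]
      exact hT.insert (fun t ht _ => (hvadj t ht).symm)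
    have hdisj' : ∀ ℓ ∈ I, ∀ t ∈ insert v T, P t ≠ ℓ := by
      intro ℓ hℓ t ht
      rcases Finset.mem_insert.1 ht with rfl | ht
      · rw [hva]; exact fun h => ha (h ▸ hℓ)
      · exact hdisj ℓ (mem_insert_of_mem hℓ) t ht
    have hsmall' : δ * ((insert v T).card + I.card) < 1 + δ := by
      rw [Finset.card_insert_of_notMem hvT]
      have hc : ((insert a I).card : ℝ) = I.card + 1 := by
        rw [Finset.card_insert_of_notMem ha]; push_cast; ring
      rw [hc] at hsmall
      push_cast
      linarith
    obtain ⟨S, hTS, hSclique, hScard⟩ := ih (insert v T) hclique hdisj' hsmall'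
    refine ⟨S, le_trans (Finset.subset_insert v T) hTS, hSclique, ?_⟩
    rw [hScard, Finset.card_insert_of_notMem hvT, Finset.card_insert_of_notMem ha]
    ring

/-- The set of cliques of `G` having exactly one vertex in part `V_i` for each `i ∈ I`. -/
noncomputable def partCliques {V : Type*} [Fintype V] [DecidableEq V] {r : ℕ}
    (G : SimpleGraph V) (P : V → Fin r) (I : Finset (Fin r)) : Finset (Finset V) :=
  Finset.univ.filter fun S => G.IsClique (S : Set V) ∧ S.image P = I ∧ S.card = I.card

/-- lower bound on the number of r-cliques containing a fixed edge, and the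
fact that when δ ≤ 1/(8r) every edge lies in at least one copy of K_r. -/
theorem stmt_16 {V : Type*} [Fintype V] [DecidableEq V] {r n : ℕ} (hr : 3 ≤ r)
    (δ : ℝ) (hδ0 : 0 ≤ δ) (hδ1 : δ ≤ 1 / (2 * r))
    (G : SimpleGraph V) (P : V → Fin r)
    (hpart : ∀ u v, G.Adj u v → P u ≠ P v)
    (hsize : ∀ i : Fin r, (Finset.univ.filter fun v => P v = i).card = n)
    (hdeg : ∀ (ℓ : Fin r) (v : V), P v ≠ ℓ →
      (1 - δ) * n ≤ ((Finset.univ.filter fun u => P u = ℓ ∧ G.Adj v u).card : ℝ)) :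
    ∀ x y : V, G.Adj x y →
      (((partCliques G P (Finset.univ \ {P x, P y})).card : ℝ)
          - 2 * δ * (r - 2) * n *
            (((Finset.univ.filter fun k : Fin r => k ≠ P x ∧ k ≠ P y).sup
              fun k => (partCliques G P (Finset.univ \ {P x, P y, k})).card : ℕ) : ℝ)
        ≤ (((G.cliqueFinset r).filter fun K => x ∈ K ∧ y ∈ K).card : ℝ)) ∧
      (δ ≤ 1 / (8 * r) →
        0 < ((G.cliqueFinset r).filter fun K => x ∈ K ∧ y ∈ K).card) := by
  intro x y hxy
  have hij : P x ≠ P y := hpart x y hxy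
  have hxyne : x ≠ y := hxy.ne
  have hn : 1 ≤ n := by
    have hx : x ∈ Finset.univ.filter fun v => P v = P x := by simp
    have := Finset.card_pos.2 ⟨x, hx⟩
    rw [hsize (P x)] at this
    omega
  have hrR : (3:ℝ) ≤ (r:ℝ) := by exact_mod_cast hr
  have hδr : δ * r ≤ 1 / 2 := by
    rw [le_div_iff₀ (by positivity : (0:ℝ) < 2 * r)] at hδ1
    have : δ * (2 * (r:ℝ)) = 2 * (δ * r) := by ring
    linarith
  -- cardinalities of part index sets
  have hcard2 : ({P x, P y} : Finset (Fin r)).card = 2 := by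
    rw [Finset.card_insert_of_notMem (by simpa using hij), Finset.card_singleton]
  have hcardI2 : ((Finset.univ : Finset (Fin r)) \ {P x, P y}).card = r - 2 := by
    rw [Finset.card_sdiff_of_subset (Finset.subset_univ _), hcard2, Finset.card_univ, Fintype.card_fin]
  set I2 : Finset (Fin r) := (Finset.univ : Finset (Fin r)) \ {P x, P y} with hI2
  set C : Finset (Finset V) := partCliques G P I2 with hC
  set M : ℕ := ((Finset.univ.filter fun k : Fin r => k ≠ P x ∧ k ≠ P y).sup
      fun k => (partCliques G P (Finset.univ \ {P x, P y, k})).card) with hM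
  have hmemC : ∀ S ∈ C, G.IsClique (S : Set V) ∧ S.image P = I2 ∧ S.card = I2.card := by
    intro S hS
    simpa [hC, partCliques] using hS
  -- the set of "good" cliques
  set Good : Finset (Finset V) := C.filter (fun S => ∀ w ∈ S, G.Adj x w ∧ G.Adj y w) with hGood
  have hxnotin : ∀ S ∈ C, x ∉ S := by
    intro S hS hxS
    have h := (hmemC S hS).2.1
    have : P x ∈ I2 := h ▸ Finset.mem_image_of_mem P hxS
    simp [hI2] at this
  have hynotin : ∀ S ∈ C, y ∉ S := by
    intro S hS hyS
    have h := (hmemC S hS).2.1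
    have : P y ∈ I2 := h ▸ Finset.mem_image_of_mem P hyS
    simp [hI2] at this
  have hGoodle : Good.card ≤ ((G.cliqueFinset r).filter fun K => x ∈ K ∧ y ∈ K).card := by
    apply Finset.card_le_card_of_injOn (fun S => insert x (insert y S))
    · intro S hS
      simp only [hGood, Finset.mem_coe, Finset.mem_filter] at hS
      obtain ⟨hSC, hadj⟩ := hS
      obtain ⟨hclique, himg, hcard⟩ := hmemC S hSC
      have hxS := hxnotin S hSC
      have hyS := hynotin S hSC
      have hcliq2 : G.IsClique ((insert y S : Finset V) : Set V) := by
        rw [Finset.coe_insert]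
        exact hclique.insert (fun w hw _ => (hadj w hw).2)
      have hcliq3 : G.IsClique ((insert x (insert y S) : Finset V) : Set V) := by
        rw [Finset.coe_insert]
        apply hcliq2.insert
        intro w hw _
        rw [Finset.coe_insert] at hw
        rcases hw with rfl | hw
        · exact hxy
        · exact (hadj w hw).1
      have hxniS : x ∉ insert y S := by
        simp only [Finset.mem_insert]
        push_neg
        exact ⟨hxyne, hxS⟩
      simp only [Finset.mem_coe, Finset.mem_filter, SimpleGraph.mem_cliqueFinset_iff]
      refine ⟨⟨hcliq3, ?_⟩, Finset.mem_insert_self _ _,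
        Finset.mem_insert_of_mem (Finset.mem_insert_self _ _)⟩
      rw [Finset.card_insert_of_notMem hxniS, Finset.card_insert_of_notMem hyS,
        hcard, hcardI2]
      omega
    · intro S1 h1 S2 h2 heq
      simp only [Finset.mem_coe, hGood, Finset.mem_filter] at h1 h2
      have heq' : insert x (insert y S1) = insert x (insert y S2) := heq
      have e1 : ((insert x (insert y S1)).erase x).erase y = S1 := by
        rw [Finset.erase_insert (by simp [hxyne, hxnotin S1 h1.1]),
          Finset.erase_insert (hynotin S1 h1.1)]
      have e2 : ((insert x (insert y S2)).erase x).erase y = S2 := by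
        rw [Finset.erase_insert (by simp [hxyne, hxnotin S2 h2.1]),
          Finset.erase_insert (hynotin S2 h2.1)]
      rw [← e1, ← e2, heq']
  -- bad cliques
  set Bad : Finset (Finset V) := C \ Good with hBad
  set B : Finset V := Finset.univ.filter
      (fun w => P w ≠ P x ∧ P w ≠ P y ∧ ¬(G.Adj x w ∧ G.Adj y w)) with hB
  have hfiber : ∀ w ∈ B, (C.filter (fun S => w ∈ S)).card ≤ M := by
    intro w hw
    simp only [hB, Finset.mem_filter, Finset.mem_univ, true_and] at hw
    obtain ⟨hwi, hwj, -⟩ := hw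
    have hsub : (C.filter (fun S => w ∈ S)).card
        ≤ (partCliques G P (Finset.univ \ {P x, P y, P w})).card := by
      apply Finset.card_le_card_of_injOn (fun S => S.erase w)
      · intro S hS
        simp only [Finset.mem_coe, Finset.mem_filter] at hS
        obtain ⟨hSC, hwS⟩ := hS
        obtain ⟨hclique, himg, hcard⟩ := hmemC S hSC
        have hinj : Set.InjOn P (S : Set V) :=
          Finset.card_image_iff.1 (by rw [himg, hcard])
        have himg' : (S.erase w).image P = I2.erase (P w) := by
          ext b
          simp only [Finset.mem_image, Finset.mem_erase]
          constructor
          · rintro ⟨u, ⟨hune, huS⟩, rfl⟩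
            refine ⟨fun h => hune (hinj huS hwS h), himg ▸ Finset.mem_image_of_mem P huS⟩
          · rintro ⟨hbk, hbI⟩
            rw [← himg] at hbI
            obtain ⟨u, huS, rfl⟩ := Finset.mem_image.1 hbI
            exact ⟨u, ⟨fun h => hbk (by rw [h]), huS⟩, rfl⟩
        have hset : I2.erase (P w) = Finset.univ \ {P x, P y, P w} := by
          ext t
          simp only [hI2, Finset.mem_erase, Finset.mem_sdiff, Finset.mem_univ, true_and,
            Finset.mem_insert, Finset.mem_singleton]
          tauto
        have hcard3 : ((Finset.univ : Finset (Fin r)) \ {P x, P y, P w}).card = r - 3 := by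
          rw [Finset.card_sdiff_of_subset (Finset.subset_univ _), Finset.card_univ, Fintype.card_fin]
          congr 1
          rw [Finset.card_insert_of_notMem (by simp [hij, hwi.symm]),
            Finset.card_insert_of_notMem (by simp [hwj.symm]), Finset.card_singleton]
        simp only [partCliques, Finset.mem_coe, Finset.mem_filter, Finset.mem_univ, true_and]
        refine ⟨hclique.subset (by exact_mod_cast Finset.erase_subset w S), ?_, ?_⟩
        · rw [himg', hset]
        · rw [Finset.card_erase_of_mem hwS, hcard, hcardI2, hcard3]
          omega
      · intro S1 h1 S2 h2 heq
        simp only [Finset.mem_coe, Finset.mem_filter] at h1 h2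
        have heq' : S1.erase w = S2.erase w := heq
        rw [← Finset.insert_erase h1.2, ← Finset.insert_erase h2.2, heq']
    refine le_trans hsub ?_
    rw [hM]
    exact Finset.le_sup (f := fun k : Fin r => (partCliques G P (Finset.univ \ {P x, P y, k})).card)
      (Finset.mem_filter.2 ⟨Finset.mem_univ _, hwi, hwj⟩)
  have hBadB : Bad.card ≤ B.card * M := by
    have hsub : Bad ⊆ B.biUnion (fun w => C.filter (fun S => w ∈ S)) := by
      intro S hS
      simp only [hBad, Finset.mem_sdiff] at hS
      obtain ⟨hSC, hnotGood⟩ := hS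
      have hne : ¬ ∀ w ∈ S, G.Adj x w ∧ G.Adj y w := by
        intro h
        exact hnotGood (by rw [hGood]; exact Finset.mem_filter.2 ⟨hSC, h⟩)
      push_neg at hne
      obtain ⟨w, hwS, hwbad⟩ := hne
      have hwI2 : P w ∈ I2 := (hmemC S hSC).2.1 ▸ Finset.mem_image_of_mem P hwS
      simp only [hI2, Finset.mem_sdiff, Finset.mem_univ, true_and, Finset.mem_insert,
        Finset.mem_singleton, not_or] at hwI2
      apply Finset.mem_biUnion.2
      refine ⟨w, ?_, Finset.mem_filter.2 ⟨hSC, hwS⟩⟩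
      simp only [hB, Finset.mem_filter, Finset.mem_univ, true_and]
      exact ⟨hwI2.1, hwI2.2, fun hc => (hwbad hc.1) hc.2⟩
    calc Bad.card ≤ (B.biUnion (fun w => C.filter (fun S => w ∈ S))).card :=
          Finset.card_le_card hsub
      _ ≤ ∑ w ∈ B, (C.filter (fun S => w ∈ S)).card := Finset.card_biUnion_le
      _ ≤ ∑ _w ∈ B, M := Finset.sum_le_sum hfiber
      _ = B.card * M := by rw [Finset.sum_const, smul_eq_mul]
  have hBcard : (B.card : ℝ) ≤ 2 * δ * ((r:ℝ) - 2) * n := by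
    have key : ∀ z : V, (P z = P x ∨ P z = P y) →
        ((Finset.univ.filter fun w => P w ≠ P x ∧ P w ≠ P y ∧ ¬ G.Adj z w).card : ℝ)
          ≤ δ * ((r:ℝ) - 2) * n := by
      intro z hz
      have hsub : (Finset.univ.filter fun w => P w ≠ P x ∧ P w ≠ P y ∧ ¬ G.Adj z w)
          ⊆ I2.biUnion (fun ℓ => Finset.univ.filter fun w => P w = ℓ ∧ ¬ G.Adj z w) := by
        intro w hw
        simp only [Finset.mem_filter, Finset.mem_univ, true_and] at hw
        apply Finset.mem_biUnion.2
        refine ⟨P w, ?_, by simp [hw.2.2]⟩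
        simp [hI2, hw.1, hw.2.1]
      calc ((Finset.univ.filter fun w => P w ≠ P x ∧ P w ≠ P y ∧ ¬ G.Adj z w).card : ℝ)
          ≤ ((I2.biUnion (fun ℓ => Finset.univ.filter fun w => P w = ℓ ∧ ¬ G.Adj z w)).card : ℝ) := by
            exact_mod_cast Finset.card_le_card hsub
        _ ≤ ∑ ℓ ∈ I2, ((Finset.univ.filter fun w => P w = ℓ ∧ ¬ G.Adj z w).card : ℝ) := by
            exact_mod_cast Finset.card_biUnion_le
        _ ≤ ∑ _ℓ ∈ I2, δ * n := by
            apply Finset.sum_le_sum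
            intro ℓ hℓ
            apply nonadj_card_le δ G P hsize hdeg ℓ z
            simp only [hI2, Finset.mem_sdiff, Finset.mem_univ, true_and, Finset.mem_insert,
              Finset.mem_singleton, not_or] at hℓ
            rcases hz with h | h
            · rw [h]; exact fun hh => hℓ.1 hh.symm
            · rw [h]; exact fun hh => hℓ.2 hh.symm
        _ = I2.card * (δ * n) := by rw [Finset.sum_const, nsmul_eq_mul]
        _ = δ * ((r:ℝ) - 2) * n := by
            rw [hcardI2]
            have : ((r - 2 : ℕ) : ℝ) = (r:ℝ) - 2 := by
              have : 2 ≤ r := by omega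
              push_cast [Nat.cast_sub this]
              ring
            rw [this]; ring
    have hsubB : B ⊆ (Finset.univ.filter fun w => P w ≠ P x ∧ P w ≠ P y ∧ ¬ G.Adj x w)
        ∪ (Finset.univ.filter fun w => P w ≠ P x ∧ P w ≠ P y ∧ ¬ G.Adj y w) := by
      intro w hw
      simp only [hB, Finset.mem_filter, Finset.mem_univ, true_and, not_and_or] at hw
      rcases hw.2.2 with h | h
      · exact Finset.mem_union_left _ (by simp [hw.1, hw.2.1, h])
      · exact Finset.mem_union_right _ (by simp [hw.1, hw.2.1, h])
    have h1 := key x (Or.inl rfl)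
    have h2 := key y (Or.inr rfl)
    have hle : (B.card : ℝ) ≤
        ((Finset.univ.filter fun w => P w ≠ P x ∧ P w ≠ P y ∧ ¬ G.Adj x w).card : ℝ)
        + ((Finset.univ.filter fun w => P w ≠ P x ∧ P w ≠ P y ∧ ¬ G.Adj y w).card : ℝ) := by
      have := le_trans (Finset.card_le_card hsubB) (Finset.card_union_le _ _)
      exact_mod_cast this
    linarith
  constructor
  · -- main inequality
    have hsplit : Bad.card + Good.card = C.card := by
      rw [hBad]
      exact Finset.card_sdiff_add_card_eq_card (Finset.filter_subset _ _)
    have hM0 : (0:ℝ) ≤ (M:ℝ) := Nat.cast_nonneg M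
    have hBadR : (Bad.card : ℝ) ≤ 2 * δ * ((r:ℝ) - 2) * n * M := by
      calc (Bad.card : ℝ) ≤ (B.card : ℝ) * M := by exact_mod_cast hBadB
        _ ≤ 2 * δ * ((r:ℝ) - 2) * n * M := mul_le_mul_of_nonneg_right hBcard hM0
    have hcast : (C.card : ℝ) = (Bad.card : ℝ) + (Good.card : ℝ) := by exact_mod_cast hsplit.symm
    have hGR : (Good.card : ℝ) ≤ (((G.cliqueFinset r).filter fun K => x ∈ K ∧ y ∈ K).card : ℝ) := by
      exact_mod_cast hGoodle
    linarith
  · -- existence of one r-clique containing the edge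
    intro _
    have hpair : G.IsClique (({x, y} : Finset V) : Set V) := by
      rw [Finset.coe_insert, Finset.coe_singleton]
      exact SimpleGraph.isClique_pair.2 (fun _ => hxy)
    have hdisj : ∀ ℓ ∈ I2, ∀ t ∈ ({x, y} : Finset V), P t ≠ ℓ := by
      intro ℓ hℓ t ht
      simp only [hI2, Finset.mem_sdiff, Finset.mem_univ, true_and, Finset.mem_insert,
        Finset.mem_singleton, not_or] at hℓ
      rcases Finset.mem_insert.1 ht with rfl | ht
      · exact fun h => hℓ.1 h.symm
      · rw [Finset.mem_singleton.1 ht]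
        exact fun h => hℓ.2 h.symm
    have hpcard : ({x, y} : Finset V).card = 2 := by
      rw [Finset.card_insert_of_notMem (by simpa using hxyne), Finset.card_singleton]
    have hsmall : δ * (({x, y} : Finset V).card + I2.card) < 1 + δ := by
      rw [hpcard, hcardI2]
      have : ((2 : ℕ) : ℝ) + ((r - 2 : ℕ) : ℝ) = (r : ℝ) := by
        have h2 : 2 ≤ r := by omega
        push_cast [Nat.cast_sub h2]
        ring
      rw [this]
      linarith
    obtain ⟨S, hTS, hSclique, hScard⟩ :=
      extend_clique δ hδ0 hn G P hsize hdeg I2 {x, y} hpair hdisj hsmall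
    rw [Finset.card_pos]
    refine ⟨S, Finset.mem_filter.2 ⟨SimpleGraph.mem_cliqueFinset_iff.2 ⟨hSclique, ?_⟩, ?_, ?_⟩⟩
    · rw [hScard, hpcard, hcardI2]; omega
    · exact hTS (Finset.mem_insert_self _ _)
    · exact hTS (Finset.mem_insert_of_mem (Finset.mem_singleton_self _))
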